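/- Let X be a real vector space, let s : X × X → ℝ be a positive semidefinite symmetric bilinear form with induced seminorm q_s(x) := s(x,x)^{1/2}, and let p : X → ℝ be a nonnegative function such that q_s(v) ≤ C_κ p(v) for all v ∈ X, where C_κ ≥ 0. Let θ ≥ 0, and suppose g, m, y ∈ X satisfy p(g − m)² ≤ s(y, g − m) and q_s(y) ≤ θ (p(m)² + q_s(m)²)^{1/2}. Then p(g − m) ≤ C_κ (1 + C_κ²)^{1/2} θ p(m). (This is the abstract form of the bound on ‖F₁(U_glo) − F₁(U_ms)‖_V established in the proof of Theorem 4.7 of the paper, where p = ‖·‖_V, s is the κ̃-weighted L² inner product, y = F₂(U_glo) − F₂(U_ms), and θ = C^{1/2}((1+Ẽ⁻¹)^{1−M} + (1+E⁻¹)^{1−N_s})^{1/2} H^{−d/2}.) -/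
import Mathlib

lemma cs_aux {X : Type*} [AddCommGroup X] [Module ℝ X]
    (s : LinearMap.BilinForm ℝ X)
    (hs_symm : ∀ x y, s x y = s y x) (hs_pos : ∀ x, 0 ≤ s x x)
    (x y : X) : (s x y) ^ 2 ≤ s x x * s y y := by
  have h : ∀ t : ℝ, 0 ≤ s y y * (t * t) + (2 * s x y) * t + s x x := by
    intro t
    have h0 := hs_pos (x + t • y)
    simp only [map_add, map_smul, LinearMap.add_apply, LinearMap.smul_apply,
      smul_eq_mul] at h0
    rw [hs_symm y x] at h0
    have he : s y y * (t * t) + (2 * s x y) * t + s x x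
        = s x x + t * s x y + (t * s x y + t * (t * s y y)) := by ring
    rw [he]
    linarith
  have hd := discrim_le_zero h
  simp only [discrim] at hd
  nlinarith

/-- abstract bound on `‖F₁(U_glo) − F₁(U_ms)‖_V` from Theorem 4.7:
if `p(g−m)² ≤ s(y, g−m)` and `q_s(y) ≤ θ (p(m)² + q_s(m)²)^{1/2}` with `q_s ≤ C_κ p`, then
`p(g−m) ≤ C_κ (1 + C_κ²)^{1/2} θ p(m)`. -/
theorem stmt9 {X : Type*} [AddCommGroup X] [Module ℝ X]
    (s : LinearMap.BilinForm ℝ X)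
    (hs_symm : ∀ x y, s x y = s y x) (hs_pos : ∀ x, 0 ≤ s x x)
    (p : X → ℝ) (hp : ∀ x, 0 ≤ p x)
    (Cκ : ℝ) (hCκ : 0 ≤ Cκ)
    (hqp : ∀ v, Real.sqrt (s v v) ≤ Cκ * p v)
    (θ : ℝ) (hθ : 0 ≤ θ)
    (g m y : X)
    (h1 : p (g - m) ^ 2 ≤ s y (g - m))
    (h2 : Real.sqrt (s y y) ≤ θ * Real.sqrt (p m ^ 2 + Real.sqrt (s m m) ^ 2)) :
    p (g - m) ≤ Cκ * Real.sqrt (1 + Cκ ^ 2) * θ * p m := by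
  set a := p (g - m) with ha
  have hcs : s y (g - m) ≤ Real.sqrt (s y y) * Real.sqrt (s (g - m) (g - m)) :=
    calc s y (g - m) ≤ |s y (g - m)| := le_abs_self _
      _ = Real.sqrt ((s y (g - m)) ^ 2) := (Real.sqrt_sq_eq_abs _).symm
      _ ≤ Real.sqrt (s y y * s (g - m) (g - m)) :=
        Real.sqrt_le_sqrt (cs_aux s hs_symm hs_pos y (g - m))
      _ = _ := Real.sqrt_mul (hs_pos y) _
  have hqgm : Real.sqrt (s (g - m) (g - m)) ≤ Cκ * a := hqp (g - m)
  have hqm : Real.sqrt (s m m) ≤ Cκ * p m := hqp m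
  have hsqrt : Real.sqrt (p m ^ 2 + Real.sqrt (s m m) ^ 2)
      ≤ Real.sqrt (1 + Cκ ^ 2) * p m := by
    rw [show Real.sqrt (1 + Cκ ^ 2) * p m = Real.sqrt ((1 + Cκ ^ 2) * (p m) ^ 2) by
      rw [Real.sqrt_mul (by positivity), Real.sqrt_sq (hp m)]]
    apply Real.sqrt_le_sqrt
    nlinarith [Real.sqrt_nonneg (s m m), hp m]
  have hqy : Real.sqrt (s y y) ≤ θ * (Real.sqrt (1 + Cκ ^ 2) * p m) :=
    h2.trans (mul_le_mul_of_nonneg_left hsqrt hθ)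
  have key : a ^ 2 ≤ θ * Real.sqrt (1 + Cκ ^ 2) * p m * (Cκ * a) := by
    have h3 : s y (g - m) ≤ (θ * (Real.sqrt (1 + Cκ ^ 2) * p m)) * (Cκ * a) := by
      apply hcs.trans
      apply mul_le_mul hqy hqgm (Real.sqrt_nonneg _)
      exact mul_nonneg hθ (mul_nonneg (Real.sqrt_nonneg _) (hp m))
    nlinarith
  rcases eq_or_lt_of_le (hp (g - m)) with h0 | h0
  · have h4 : a = 0 := h0.symm
    rw [h4]
    exact mul_nonneg (mul_nonneg (mul_nonneg hCκ (Real.sqrt_nonneg _)) hθ) (hp m)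
  · have h5 : a * a ≤ (Cκ * Real.sqrt (1 + Cκ ^ 2) * θ * p m) * a := by nlinarith
    exact le_of_mul_le_mul_right h5 h0
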